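/- (Lemma 3.8) Let G = (V,E) be an undirected graph with |V| > 2. If G is decomposable and has a color class Â with Ã = V, then G has a maximal strong partitive set which is not a singleton (i.e., a non-trivial maximal strong partitive set). -/

import Mathlib

open Set

namespace TransOrient

variable {V : Type*}

/-- `E` is the edge set of an undirected graph on the vertex type `V`:
an irreflexive and symmetric relation, given as a set of ordered pairs. -/
def IsGraph (E : Set (V × V)) : Prop :=
  (∀ a : V, (a, a) ∉ E) ∧ (∀ a b : V, (a, b) ∈ E ↔ (b, a) ∈ E)

/-- The forcing relation `Γ` on directed edges:
`(a,b) Γ (a',b')` iff (`a = a'` and `(b,b') ∉ E`) or (`b = b'` and `(a,a') ∉ E`). -/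
def Gamma (E : Set (V × V)) (e e' : V × V) : Prop :=
  e ∈ E ∧ e' ∈ E ∧
    ((e.1 = e'.1 ∧ (e.2, e'.2) ∉ E) ∨ (e.2 = e'.2 ∧ (e.1, e'.1) ∉ E))

/-- The implication classes of `G = (V,E)`: equivalence classes on `E` of
the reflexive-transitive closure of `Γ`. -/
def IsImplicationClass (E : Set (V × V)) (A : Set (V × V)) : Prop :=
  ∃ e ∈ E, A = {e' | Relation.ReflTransGen (Gamma E) e e'}

/-- `A⁻¹ = {(b,a) : (a,b) ∈ A}`. -/
def inv (A : Set (V × V)) : Set (V × V) := {p | (p.2, p.1) ∈ A}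

/-- The color class `Â = A ∪ A⁻¹` of an implication class `A`. -/
def hat (A : Set (V × V)) : Set (V × V) := A ∪ inv A

/-- `Ã`: the set of vertices incident to an edge of `A`. -/
def tilde (A : Set (V × V)) : Set V := {v | ∃ w, (v, w) ∈ A ∨ (w, v) ∈ A}

/-- A transitive orientation `E'` of a symmetric edge set `F`:
`E' ⊆ F`, `E' ∩ E'⁻¹ = ∅`, `E' ∪ E'⁻¹ = F` and `E'` is transitive. -/
def IsTransOrientation (F E' : Set (V × V)) : Prop :=
  E' ⊆ F ∧ E' ∩ inv E' = ∅ ∧ E' ∪ inv E' = F ∧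
    ∀ a b c : V, (a, b) ∈ E' → (b, c) ∈ E' → (a, c) ∈ E'

/-- `G` is a comparability graph if `E` admits a transitive orientation. -/
def IsComparability (E : Set (V × V)) : Prop :=
  ∃ E' : Set (V × V), IsTransOrientation E E'

/-- `E(X)`: the set of edges of `E` with both endpoints in `X`. -/
def edgesOn (E : Set (V × V)) (X : Set V) : Set (V × V) :=
  {p ∈ E | p.1 ∈ X ∧ p.2 ∈ X}

/-- `X` is a partitive set of `G = (V,E)`. -/
def IsPartitive (E : Set (V × V)) (X : Set V) : Prop :=
  ∀ a ∈ X, ∀ b ∈ X, ∀ c ∉ X, ((a, c) ∈ E ↔ (b, c) ∈ E)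

/-- `X` is a "strong" partitive set of `G = (V,E)`. -/
def IsStrongPartitive (E : Set (V × V)) (X : Set V) : Prop :=
  IsPartitive E X ∧
    ∀ Y : Set V, IsPartitive E Y → (Y ∩ X).Nonempty → X ⊆ Y ∨ Y ⊆ X

/-- `X` is a maximal "strong" partitive set of `G = (V,E)`: a strong partitive
set different from `V` which is maximal, for inclusion, among the strong
partitive sets different from `V`. -/
def IsMaxStrongPartitive (E : Set (V × V)) (X : Set V) : Prop :=
  IsStrongPartitive E X ∧ X ≠ Set.univ ∧
    ∀ Y : Set V, IsStrongPartitive E Y → Y ≠ Set.univ → X ⊆ Y → X = Y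

/-- `X` is a partitive set of the induced subgraph `G(W) = (W, E(W))`. -/
def IsPartitiveIn (E : Set (V × V)) (W : Set V) (X : Set V) : Prop :=
  X ⊆ W ∧ ∀ a ∈ X, ∀ b ∈ X, ∀ c ∈ W \ X,
    ((a, c) ∈ edgesOn E W ↔ (b, c) ∈ edgesOn E W)

/-- `X` is a "strong" partitive set of the induced subgraph `G(W)`. -/
def IsStrongPartitiveIn (E : Set (V × V)) (W : Set V) (X : Set V) : Prop :=
  IsPartitiveIn E W X ∧
    ∀ Y : Set V, IsPartitiveIn E W Y → (Y ∩ X).Nonempty → X ⊆ Y ∨ Y ⊆ X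

/-- `X` is a maximal "strong" partitive set of the induced subgraph `G(W)`. -/
def IsMaxStrongPartitiveIn (E : Set (V × V)) (W : Set V) (X : Set V) : Prop :=
  IsStrongPartitiveIn E W X ∧ X ≠ W ∧
    ∀ Y : Set V, IsStrongPartitiveIn E W Y → Y ≠ W → X ⊆ Y → X = Y

/-- Two directed edges lie in the same color class of `G = (V,E)`. -/
def SameColor (E : Set (V × V)) (e e' : V × V) : Prop :=
  ∃ A : Set (V × V), IsImplicationClass E A ∧ e ∈ hat A ∧ e' ∈ hat A

/-- A simplex of `G = (V,E)` given by its (finite, nonempty) vertex set `VS`: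
a complete induced subgraph whose edges, for distinct unordered pairs,
lie in distinct color classes of `G`. -/
def IsSimplex (E : Set (V × V)) (VS : Set V) : Prop :=
  VS.Finite ∧ VS.Nonempty ∧
    (∀ a ∈ VS, ∀ b ∈ VS, a ≠ b → (a, b) ∈ E) ∧
    (∀ a ∈ VS, ∀ b ∈ VS, ∀ c ∈ VS, ∀ d ∈ VS, a ≠ b → c ≠ d →
      SameColor E (a, b) (c, d) → (a = c ∧ b = d) ∨ (a = d ∧ b = c))

/-- The rank of a simplex on `r+1` vertices is `r`. -/
noncomputable def simplexRank (VS : Set V) : ℕ := VS.ncard - 1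

/-- A maximal simplex: its vertex set is not properly contained in the
vertex set of another simplex. -/
def IsMaxSimplex (E : Set (V × V)) (VS : Set V) : Prop :=
  IsSimplex E VS ∧ ∀ VS' : Set V, IsSimplex E VS' → VS ⊆ VS' → VS = VS'

/-- The multiplex `M(S)` generated by a simplex with vertex set `VS`:
the union of all color classes of `G` containing an edge of the simplex. -/
def multiplex (E : Set (V × V)) (VS : Set V) : Set (V × V) :=
  {e | ∃ A : Set (V × V), IsImplicationClass E A ∧ e ∈ hat A ∧
    ∃ a ∈ VS, ∃ b ∈ VS, a ≠ b ∧ (a, b) ∈ hat A}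

/-- A maximal multiplex of `G`: a multiplex generated by a maximal simplex. -/
def IsMaxMultiplex (E : Set (V × V)) (M : Set (V × V)) : Prop :=
  ∃ VS : Set V, IsMaxSimplex E VS ∧ M = multiplex E VS

/-- `P` is a partition of the set `W`. -/
def IsPartitionOf (W : Set V) (P : Set (Set V)) : Prop :=
  (∀ X ∈ P, X.Nonempty) ∧ ⋃₀ P = W ∧
    ∀ X ∈ P, ∀ Y ∈ P, X ≠ Y → X ∩ Y = ∅

/-- Adjacency in the quotient of the induced subgraph `G(W)` by a partition:
two distinct blocks are adjacent iff some pair of representatives is an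
edge of `E(W)`. -/
def quotAdj (E : Set (V × V)) (W : Set V) (X Y : Set V) : Prop :=
  X ≠ Y ∧ ∃ x ∈ X, ∃ y ∈ Y, (x, y) ∈ edgesOn E W

/-- A partitive set of an abstract graph with vertex set `W` and adjacency
relation `Adj`. -/
def IsPartitiveGen {α : Type*} (W : Set α) (Adj : α → α → Prop) (X : Set α) : Prop :=
  X ⊆ W ∧ ∀ a ∈ X, ∀ b ∈ X, ∀ c ∈ W \ X, (Adj a c ↔ Adj b c)

/-- An abstract graph `(W, Adj)` is indecomposable if all its partitive
sets are trivial. -/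
def IndecomposableGen {α : Type*} (W : Set α) (Adj : α → α → Prop) : Prop :=
  ∀ X : Set α, IsPartitiveGen W Adj X → X.Subsingleton ∨ X = W

/-- An isomorphism between the graphs `(Vα, Aα)` and `(Vβ, Aβ)`:
a bijection of the vertex sets preserving adjacency in both directions. -/
def GraphIso {α β : Type*} (Vα : Set α) (Aα : α → α → Prop)
    (Vβ : Set β) (Aβ : β → β → Prop) : Prop :=
  ∃ f : α → β, Set.BijOn f Vα Vβ ∧
    ∀ a ∈ Vα, ∀ b ∈ Vα, (Aα a b ↔ Aβ (f a) (f b))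

/-- `(V', E')` is a subgraph of the induced subgraph `G(W)` of `G = (V,E)`. -/
def IsSubgraphOf (E : Set (V × V)) (W : Set V) (V' : Set V) (E' : Set (V × V)) : Prop :=
  V' ⊆ W ∧ E' ⊆ edgesOn E W ∧ (∀ e ∈ E', e.1 ∈ V' ∧ e.2 ∈ V') ∧
    (∀ a b : V, (a, b) ∈ E' ↔ (b, a) ∈ E')

end TransOrient

section Aux
open TransOrient

variable {V : Type*} {E A : Set (V × V)}

lemma aux_A_sub_E (hA : IsImplicationClass E A) : A ⊆ E := by
  obtain ⟨e, he, rfl⟩ := hA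
  intro e' he'
  induction he' with
  | refl => exact he
  | tail _ hg _ => exact hg.2.1

lemma aux_gamma_symm (hG : IsGraph E) : Symmetric (Gamma E) := by
  rintro ⟨a, b⟩ ⟨c, d⟩ ⟨he, he', h⟩
  refine ⟨he', he, ?_⟩
  rcases h with ⟨h1, h2⟩ | ⟨h1, h2⟩
  · exact Or.inl ⟨h1.symm, fun hh => h2 ((hG.2 d b).mp hh)⟩
  · exact Or.inr ⟨h1.symm, fun hh => h2 ((hG.2 c a).mp hh)⟩

lemma aux_reach (hG : IsGraph E) (hA : IsImplicationClass E A)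
    {e e' : V × V} (he : e ∈ A) (he' : e' ∈ A) :
    Relation.ReflTransGen (Gamma E) e e' := by
  obtain ⟨e₀, he₀, rfl⟩ := hA
  exact Relation.ReflTransGen.trans
    ((@Relation.ReflTransGen.stdSymm _ _ ⟨fun _ _ h => aux_gamma_symm hG h⟩).symm _ _ he) he'

lemma aux_exists_edge (hA : IsImplicationClass E A) : ∃ p q, (p, q) ∈ A := by
  obtain ⟨⟨p, q⟩, he, rfl⟩ := hA
  exact ⟨p, q, Relation.ReflTransGen.refl⟩

/-- If an implication class with `Ã = V` has an edge inside a partitive set `Y`,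
then `Y = V`. -/
lemma aux_inside (hG : IsGraph E) (hA : IsImplicationClass E A)
    (hspan : tilde A = Set.univ) {Y : Set V} (hY : IsPartitive E Y)
    (hYne : Y ≠ Set.univ) {a b : V} (hab : (a, b) ∈ A)
    (ha : a ∈ Y) (hb : b ∈ Y) : False := by
  have key : ∀ e' : V × V, Relation.ReflTransGen (Gamma E) (a, b) e' →
      e'.1 ∈ Y ∧ e'.2 ∈ Y := by
    intro e' h
    induction h with
    | refl => exact ⟨ha, hb⟩
    | tail h1 h2 ih =>
      rename_i e₁ e₂
      obtain ⟨x, y⟩ := e₁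
      obtain ⟨u, v⟩ := e₂
      obtain ⟨hxy, huv, hcases⟩ := h2
      obtain ⟨hx, hy⟩ := ih
      simp only at hx hy
      rcases hcases with ⟨h1', h2'⟩ | ⟨h1', h2'⟩
      · simp only at h1' h2' ⊢
        subst h1'
        refine ⟨hx, ?_⟩
        by_contra hv
        exact h2' ((hY x hx y hy v hv).mp huv)
      · simp only at h1' h2' ⊢
        subst h1'
        refine ⟨?_, hy⟩
        by_contra hu
        exact h2' ((hY x hx y hy u hu).mpr ((hG.2 u y).mp huv))
  obtain ⟨v, hv⟩ : ∃ v, v ∉ Y := by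
    by_contra h
    push_neg at h
    exact hYne (Set.eq_univ_of_forall h)
  have hvA : v ∈ tilde A := hspan ▸ Set.mem_univ v
  obtain ⟨w, hw | hw⟩ := hvA
  · exact hv (key _ (aux_reach hG hA hab hw)).1
  · exact hv (key _ (aux_reach hG hA hab hw)).2

/-- Two proper partitive sets covering `V`, with an edge `(p,q)` of the
spanning class crossing from `Y1∖Y2` to `Y2∖Y1`, have empty intersection. -/
lemma aux_cross (hG : IsGraph E) (hA : IsImplicationClass E A)
    (hspan : tilde A = Set.univ) {Y1 Y2 : Set V}
    (h1 : IsPartitive E Y1) (h2 : IsPartitive E Y2)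
    (hcover : Y1 ∪ Y2 = Set.univ) {p q : V} (hpq : (p, q) ∈ A)
    (hp1 : p ∈ Y1) (hp2 : p ∉ Y2) (hq2 : q ∈ Y2) (hq1 : q ∉ Y1)
    (hI : (Y1 ∩ Y2).Nonempty) : False := by
  have key : ∀ e' : V × V, Relation.ReflTransGen (Gamma E) (p, q) e' →
      e'.1 ∈ Y1 ∧ e'.1 ∉ Y2 ∧ e'.2 ∈ Y2 ∧ e'.2 ∉ Y1 ∧ e' ∈ E := by
    intro e' h
    induction h with
    | refl => exact ⟨hp1, hp2, hq2, hq1, aux_A_sub_E hA hpq⟩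
    | tail h1' h2' ih =>
      rename_i e₁ e₂
      obtain ⟨x, y⟩ := e₁
      obtain ⟨u, v⟩ := e₂
      obtain ⟨hxy, huv, hcases⟩ := h2'
      obtain ⟨hx1, hx2, hy2, hy1, hxyE⟩ := ih
      simp only at hx1 hx2 hy2 hy1
      rcases hcases with ⟨he1, he2⟩ | ⟨he1, he2⟩
      · simp only at he1 he2 ⊢
        subst he1
        have hv1 : v ∉ Y1 := by
          intro hv1
          exact he2 ((hG.2 v y).mp ((h1 x hx1 v hv1 y hy1).mp hxyE))
        have hv2 : v ∈ Y2 := by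
          rcases hcover.ge (Set.mem_univ v) with h | h
          · exact absurd h hv1
          · exact h
        exact ⟨hx1, hx2, hv2, hv1, huv⟩
      · simp only at he1 he2 ⊢
        subst he1
        have hu2 : u ∉ Y2 := by
          intro hu2
          exact he2 ((hG.2 u x).mp ((h2 y hy2 u hu2 x hx2).mp ((hG.2 x y).mp hxyE)))
        have hu1 : u ∈ Y1 := by
          rcases hcover.ge (Set.mem_univ u) with h | h
          · exact h
          · exact absurd h hu2
        exact ⟨hu1, hu2, hy2, hy1, huv⟩
  obtain ⟨i, hi1, hi2⟩ := hI
  have hiA : i ∈ tilde A := hspan ▸ Set.mem_univ i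
  obtain ⟨w, hw | hw⟩ := hiA
  · exact (key _ (aux_reach hG hA hpq hw)).2.1 hi2
  · exact (key _ (aux_reach hG hA hpq hw)).2.2.2.1 hi1

/-- Two proper partitive sets with nonempty intersection cannot cover `V`. -/
lemma aux_no_cover (hG : IsGraph E) (hA : IsImplicationClass E A)
    (hspan : tilde A = Set.univ) {Y1 Y2 : Set V}
    (h1 : IsPartitive E Y1) (h1ne : Y1 ≠ Set.univ)
    (h2 : IsPartitive E Y2) (h2ne : Y2 ≠ Set.univ)
    (hcover : Y1 ∪ Y2 = Set.univ) (hI : (Y1 ∩ Y2).Nonempty) : False := by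
  obtain ⟨p, q, hApq⟩ := aux_exists_edge hA
  have hmem : ∀ v : V, v ∈ Y1 ∨ v ∈ Y2 := fun v => hcover.ge (Set.mem_univ v)
  rcases hmem p with hp1 | hp2
  · have hq1 : q ∉ Y1 := fun h => aux_inside hG hA hspan h1 h1ne hApq hp1 h
    have hq2 : q ∈ Y2 := (hmem q).resolve_left hq1
    have hp2 : p ∉ Y2 := fun h => aux_inside hG hA hspan h2 h2ne hApq h hq2
    exact aux_cross hG hA hspan h1 h2 hcover hApq hp1 hp2 hq2 hq1 hI
  · have hq2 : q ∉ Y2 := fun h => aux_inside hG hA hspan h2 h2ne hApq hp2 h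
    have hq1 : q ∈ Y1 := (hmem q).resolve_right hq2
    have hp1 : p ∉ Y1 := fun h => aux_inside hG hA hspan h1 h1ne hApq h hq1
    exact aux_cross hG hA hspan h2 h1 (by rw [Set.union_comm]; exact hcover)
      hApq hp2 hp1 hq1 hq2 (by rwa [Set.inter_comm])

lemma aux_union_partitive {Y1 Y2 : Set V} (h1 : IsPartitive E Y1)
    (h2 : IsPartitive E Y2) {z : V} (hz1 : z ∈ Y1) (hz2 : z ∈ Y2) :
    IsPartitive E (Y1 ∪ Y2) := by
  intro a ha b hb c hc
  have hc1 : c ∉ Y1 := fun h => hc (Or.inl h)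
  have hc2 : c ∉ Y2 := fun h => hc (Or.inr h)
  have key : ∀ a ∈ Y1 ∪ Y2, ((a, c) ∈ E ↔ (z, c) ∈ E) := by
    rintro a (h | h)
    · exact h1 a h z hz1 c hc1
    · exact h2 a h z hz2 c hc2
  exact (key a ha).trans (key b hb).symm

end Aux

open TransOrient in
/-- **(Lemma 3.8)** If `|V| > 2`, `G` is decomposable and has a color class `Â`
with `Ã = V`, then `G` has a non-trivial maximal strong partitive set. -/
theorem decomposable_spanning_color_has_nontrivial_max_strong
    {V : Type*} (E : Set (V × V)) (hG : IsGraph E)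
    (hcard : 2 < Cardinal.mk V)
    (hdec : ∃ X : Set V, IsPartitive E X ∧ ¬ X.Subsingleton ∧ X ≠ Set.univ)
    (A : Set (V × V)) (hA : IsImplicationClass E A) (hspan : tilde A = Set.univ) :
    ∃ X : Set V, IsMaxStrongPartitive E X ∧ ¬ X.Subsingleton := by
  obtain ⟨X, hX, hXnt, hXne⟩ := hdec
  rw [Set.not_subsingleton_iff] at hXnt
  obtain ⟨x0, hx0, x1, hx1, hne01⟩ := hXnt
  set F : Set (Set V) := {Y | IsPartitive E Y ∧ Y ≠ Set.univ ∧ x0 ∈ Y} with hF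
  set M : Set V := ⋃₀ F with hMdef
  have hsubM : ∀ Y ∈ F, Y ⊆ M := fun Y hY => Set.subset_sUnion_of_mem hY
  have hXF : X ∈ F := ⟨hX, hXne, hx0⟩
  have hXM : X ⊆ M := hsubM X hXF
  have hMpart : IsPartitive E M := by
    intro a ha b hb c hc
    obtain ⟨Ya, hYa, haY⟩ := ha
    obtain ⟨Yb, hYb, hbY⟩ := hb
    have hca : c ∉ Ya := fun h => hc (hsubM _ hYa h)
    have hcb : c ∉ Yb := fun h => hc (hsubM _ hYb h)
    exact (hYa.1 a haY x0 hYa.2.2 c hca).trans (hYb.1 x0 hYb.2.2 b hbY c hcb)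
  have hMne : M ≠ Set.univ := by
    intro hM
    obtain ⟨p, q, hApq⟩ := aux_exists_edge hA
    have hpM : p ∈ M := hM ▸ Set.mem_univ p
    have hqM : q ∈ M := hM ▸ Set.mem_univ q
    obtain ⟨Y1, hY1, hp1⟩ := hpM
    obtain ⟨Y2, hY2, hq2⟩ := hqM
    have hq1 : q ∉ Y1 := fun h => aux_inside hG hA hspan hY1.1 hY1.2.1 hApq hp1 h
    have hp2 : p ∉ Y2 := fun h => aux_inside hG hA hspan hY2.1 hY2.2.1 hApq h hq2
    have hZ : IsPartitive E (Y1 ∪ Y2) :=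
      aux_union_partitive hY1.1 hY2.1 hY1.2.2 hY2.2.2
    by_cases hZu : Y1 ∪ Y2 = Set.univ
    · exact aux_cross hG hA hspan hY1.1 hY2.1 hZu hApq hp1 hp2 hq2 hq1
        ⟨x0, hY1.2.2, hY2.2.2⟩
    · exact aux_inside hG hA hspan hZ hZu hApq (Or.inl hp1) (Or.inr hq2)
  refine ⟨M, ⟨⟨hMpart, ?_⟩, hMne, ?_⟩, ?_⟩
  · intro Y hY hYM
    by_cases hYu : Y = Set.univ
    · subst hYu; exact Or.inl (Set.subset_univ M)
    by_cases hx0Y : x0 ∈ Y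
    · exact Or.inr (hsubM Y ⟨hY, hYu, hx0Y⟩)
    obtain ⟨z, hzY, hzM⟩ := hYM
    obtain ⟨Y', hY', hzY'⟩ := hzM
    have hZ : IsPartitive E (Y ∪ Y') := aux_union_partitive hY hY'.1 hzY hzY'
    have hZu : Y ∪ Y' ≠ Set.univ := fun h =>
      aux_no_cover hG hA hspan hY hYu hY'.1 hY'.2.1 h ⟨z, hzY, hzY'⟩
    exact Or.inr ((Set.subset_union_left).trans (hsubM _ ⟨hZ, hZu, Or.inr hY'.2.2⟩))
  · intro Y hYs hYne hMY
    have hx0Y : x0 ∈ Y := hMY (hXM hx0)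
    exact hMY.antisymm (hsubM Y ⟨hYs.1, hYne, hx0Y⟩)
  · intro h
    exact hne01 (h (hXM hx0) (hXM hx1))
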